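/- Let O be a finite set, pla : M_O → [0,∞) continuous, μ ∈ M_O with pla(μ) ≠ 0, and ε > 0. Then for every μ-normal observation stream ω ∈ O^ℕ (i.e., for each o ∈ O the relative frequency of o among the first m entries of ω converges to μ(o) as m → ∞, and no entry ω_i has μ(ω_i) = 0), there exists K such that for all m ≥ K and all ν ∈ M_O with d(ν, μ) ≥ ε, one has pla(μ)·∏_{i=1}^m μ(ω_i) > pla(ν)·∏_{i=1}^m ν(ω_i). -/

import Mathlib

open Filter

/-- The simplex `M_O` of probability mass functions on a finite set `O`,
identified with `{x ∈ [0,1]^O | ∑ x_i = 1}`. -/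
def simplex (O : Type*) [Fintype O] : Set (O → ℝ) :=
  {x | (∀ o, 0 ≤ x o) ∧ ∑ o, x o = 1}

/-- Euclidean distance on the simplex `M_O ⊆ ℝ^O`. -/
noncomputable def euclDist {O : Type*} [Fintype O] (x y : O → ℝ) : ℝ :=
  Real.sqrt (∑ o, (x o - y o) ^ 2)

section Aux

lemma simplex_isCompact {O : Type} [Fintype O] : IsCompact (simplex O) := by
  have hsub : simplex O ⊆ Set.pi Set.univ (fun _ : O => Set.Icc (0:ℝ) 1) := by
    rintro x ⟨hx0, hx1⟩ o _
    exact ⟨hx0 o, by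
      calc x o ≤ ∑ o', x o' := Finset.single_le_sum (fun o' _ => hx0 o') (Finset.mem_univ o)
      _ = 1 := hx1⟩
  have hclosed : IsClosed (simplex O) := by
    have h1 : IsClosed {x : O → ℝ | ∀ o, 0 ≤ x o} := by
      have he : {x : O → ℝ | ∀ o, 0 ≤ x o} = ⋂ o, {x | 0 ≤ x o} := by
        ext x; simp [Set.mem_iInter]
      rw [he]
      exact isClosed_iInter fun o => isClosed_le continuous_const (continuous_apply o)
    have h2 : IsClosed {x : O → ℝ | ∑ o, x o = 1} :=
      isClosed_eq (by continuity) continuous_const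
    exact h1.inter h2
  exact (isCompact_univ_pi fun _ => isCompact_Icc).of_isClosed_subset hclosed hsub

lemma euclDist_continuous {O : Type} [Fintype O] (μ : O → ℝ) :
    Continuous fun ν : O → ℝ => euclDist ν μ := by
  unfold euclDist
  exact Real.continuous_sqrt.comp (by continuity)

lemma euclDist_self {O : Type} [Fintype O] (μ : O → ℝ) : euclDist μ μ = 0 := by
  simp [euclDist]

lemma prod_comp_eq {O : Type} [Fintype O] [DecidableEq O] (ω : ℕ → O) (f : O → ℝ) (m : ℕ) :
    ∏ i ∈ Finset.range m, f (ω i) =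
      ∏ o, f o ^ ((Finset.range m).filter (fun i => ω i = o)).card := by
  rw [← Finset.prod_fiberwise_of_maps_to (fun i _ => Finset.mem_univ (ω i)) (fun i => f (ω i))]
  refine Finset.prod_congr rfl fun o _ => ?_
  rw [Finset.prod_congr rfl (fun i hi => by
    rw [(Finset.mem_filter.mp hi).2] : ∀ i ∈ _, f (ω i) = f o), Finset.prod_const]

lemma card_sum {O : Type} [Fintype O] [DecidableEq O] (ω : ℕ → O) (m : ℕ) :
    ∑ o, ((Finset.range m).filter (fun i => ω i = o)).card = m := by
  rw [← Finset.card_eq_sum_card_fiberwise (fun i _ => Finset.mem_univ (ω i)), Finset.card_range]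

lemma gibbs_strict {O : Type} [Fintype O] [DecidableEq O] (μ ν : O → ℝ)
    (hμ : μ ∈ simplex O) (hν : ν ∈ simplex O) (hne : ν ≠ μ) :
    ∏ o ∈ Finset.univ.filter (fun o => μ o ≠ 0), ν o ^ (μ o) <
    ∏ o ∈ Finset.univ.filter (fun o => μ o ≠ 0), μ o ^ (μ o) := by
  set supp := Finset.univ.filter (fun o => μ o ≠ 0) with hsupp
  have hμpos : ∀ o ∈ supp, 0 < μ o := fun o ho =>
    ((hμ.1 o).lt_of_ne' (Finset.mem_filter.mp ho).2)
  have hgμpos : 0 < ∏ o ∈ supp, μ o ^ (μ o) :=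
    Finset.prod_pos fun o ho => Real.rpow_pos_of_pos (hμpos o ho) _
  by_cases hz : ∃ o ∈ supp, ν o = 0
  · obtain ⟨o, ho, hzo⟩ := hz
    calc ∏ o ∈ supp, ν o ^ (μ o) = 0 := by
          refine Finset.prod_eq_zero ho ?_
          rw [hzo, Real.zero_rpow (Finset.mem_filter.mp ho).2]
      _ < _ := hgμpos
  · push_neg at hz
    have hνpos : ∀ o ∈ supp, 0 < ν o := fun o ho => (hν.1 o).lt_of_ne' (hz o ho)
    have hμsum : ∑ o ∈ supp, μ o = 1 := by
      rw [← hμ.2]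
      exact Finset.sum_subset (Finset.subset_univ _)
        (fun o _ ho => by simpa [hsupp] using ho)
    have hνsum : ∑ o ∈ supp, ν o ≤ 1 := by
      rw [← hν.2]
      exact Finset.sum_le_sum_of_subset_of_nonneg (Finset.subset_univ _)
        (fun o _ _ => hν.1 o)
    have hkey : ∑ o ∈ supp, μ o * Real.log (ν o / μ o) < 0 := by
      by_cases hd : ∀ o ∈ supp, ν o = μ o
      · exfalso
        apply hne
        have hνsupp : ∑ o ∈ supp, ν o = 1 := by
          rw [Finset.sum_congr rfl hd, hμsum]
        have hrest : ∑ o ∈ Finset.univ \ supp, ν o = 0 := by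
          have := Finset.sum_sdiff (Finset.subset_univ supp) (f := ν)
          rw [hνsupp, hν.2] at this
          linarith
        have hzero : ∀ o ∈ Finset.univ \ supp, ν o = 0 := fun o ho =>
          (Finset.sum_eq_zero_iff_of_nonneg (fun o _ => hν.1 o)).mp hrest o ho
        funext o
        by_cases hoo : o ∈ supp
        · exact hd o hoo
        · have h1 : ν o = 0 := hzero o (by simp [Finset.mem_sdiff, hoo])
          have h2 : μ o = 0 := by
            by_contra hc; exact hoo (Finset.mem_filter.mpr ⟨Finset.mem_univ o, hc⟩)
          rw [h1, h2]
      · push_neg at hd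
        obtain ⟨o₀, ho₀, hneq⟩ := hd
        have hlt : ∑ o ∈ supp, μ o * Real.log (ν o / μ o) <
            ∑ o ∈ supp, (ν o - μ o) := by
          refine Finset.sum_lt_sum (fun o ho => ?_) ⟨o₀, ho₀, ?_⟩
          · have ht : 0 < ν o / μ o := div_pos (hνpos o ho) (hμpos o ho)
            have := Real.log_le_sub_one_of_pos ht
            have h2 : μ o * Real.log (ν o / μ o) ≤ μ o * (ν o / μ o - 1) :=
              mul_le_mul_of_nonneg_left this (hμpos o ho).le
            have h0 : μ o ≠ 0 := (hμpos o ho).ne'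
            calc μ o * Real.log (ν o / μ o) ≤ μ o * (ν o / μ o - 1) := h2
              _ = ν o - μ o := by field_simp
          · have ht : 0 < ν o₀ / μ o₀ := div_pos (hνpos o₀ ho₀) (hμpos o₀ ho₀)
            have h0 : μ o₀ ≠ 0 := (hμpos o₀ ho₀).ne'
            have hne1 : ν o₀ / μ o₀ ≠ 1 := by
              intro hc
              rw [div_eq_one_iff_eq h0] at hc
              exact hneq hc
            have := Real.log_lt_sub_one_of_pos ht hne1
            have h2 : μ o₀ * Real.log (ν o₀ / μ o₀) < μ o₀ * (ν o₀ / μ o₀ - 1) :=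
              mul_lt_mul_of_pos_left this (hμpos o₀ ho₀)
            calc μ o₀ * Real.log (ν o₀ / μ o₀) < μ o₀ * (ν o₀ / μ o₀ - 1) := h2
              _ = ν o₀ - μ o₀ := by field_simp
        have : ∑ o ∈ supp, (ν o - μ o) ≤ 0 := by
          rw [Finset.sum_sub_distrib, hμsum]; linarith
        linarith
    have hlog : ∑ o ∈ supp, μ o * Real.log (ν o) < ∑ o ∈ supp, μ o * Real.log (μ o) := by
      have : ∀ o ∈ supp, μ o * Real.log (ν o / μ o)
          = μ o * Real.log (ν o) - μ o * Real.log (μ o) := fun o ho => by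
        rw [Real.log_div (hνpos o ho).ne' (hμpos o ho).ne']; ring
      rw [Finset.sum_congr rfl this, Finset.sum_sub_distrib] at hkey
      linarith
    have e1 : ∏ o ∈ supp, ν o ^ (μ o) = Real.exp (∑ o ∈ supp, μ o * Real.log (ν o)) := by
      rw [Real.exp_sum]
      exact Finset.prod_congr rfl fun o ho => by
        rw [Real.rpow_def_of_pos (hνpos o ho), mul_comm]
    have e2 : ∏ o ∈ supp, μ o ^ (μ o) = Real.exp (∑ o ∈ supp, μ o * Real.log (μ o)) := by
      rw [Real.exp_sum]
      exact Finset.prod_congr rfl fun o ho => by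
        rw [Real.rpow_def_of_pos (hμpos o ho), mul_comm]
    rw [e1, e2]
    exact Real.exp_lt_exp.mpr hlog

end Aux

set_option maxHeartbeats 2000000 in
theorem normal_streams_make_true_distribution_most_plausible
    {O : Type} [Fintype O] [DecidableEq O]
    (pla : (O → ℝ) → ℝ)
    (hpla_cont : ContinuousOn pla (simplex O))
    (hpla_nonneg : ∀ ν ∈ simplex O, 0 ≤ pla ν)
    (μ : O → ℝ) (hμ : μ ∈ simplex O) (hpla : pla μ ≠ 0)
    (ε : ℝ) (hε : 0 < ε)
    (ω : ℕ → O)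
    (hfreq : ∀ o : O, Tendsto
      (fun m : ℕ => (((Finset.range m).filter (fun i => ω i = o)).card : ℝ) / m)
      atTop (nhds (μ o)))
    (hsupp : ∀ i, μ (ω i) ≠ 0) :
    ∃ K, ∀ m ≥ K, ∀ ν ∈ simplex O, ε ≤ euclDist ν μ →
      pla ν * ∏ i ∈ Finset.range m, ν (ω i) <
        pla μ * ∏ i ∈ Finset.range m, μ (ω i) := by
  classical
  -- the bad set S
  set S : Set (O → ℝ) := simplex O ∩ {x | ε ≤ euclDist x μ} with hSdef
  by_cases hSne : S.Nonempty
  swap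
  · exact ⟨0, fun m _ ν hν hd => absurd ⟨ν, hν, hd⟩ hSne⟩
  set supp := Finset.univ.filter (fun o => μ o ≠ 0) with hsuppdef
  have hμpos : ∀ o ∈ supp, 0 < μ o := fun o ho =>
    ((hμ.1 o).lt_of_ne' (Finset.mem_filter.mp ho).2)
  have hplaμpos : 0 < pla μ := (hpla_nonneg μ hμ).lt_of_ne' hpla
  have hsupp_ne : supp.Nonempty := by
    by_contra h
    rw [Finset.not_nonempty_iff_eq_empty] at h
    have hz : ∑ o, μ o = 0 := Finset.sum_eq_zero fun o _ => by
      by_contra hc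
      have : o ∈ supp := Finset.mem_filter.mpr ⟨Finset.mem_univ o, hc⟩
      simp [h] at this
    rw [hμ.2] at hz; norm_num at hz
  -- minimal positive mass p
  obtain ⟨oₚ, hoₚ, hpmin⟩ := supp.exists_min_image μ hsupp_ne
  set p := μ oₚ with hpdef
  have hp0 : 0 < p := hμpos _ hoₚ
  have hple : ∀ o ∈ supp, p ≤ μ o := hpmin
  have hμle1 : ∀ o, μ o ≤ 1 := fun o => by
    calc μ o ≤ ∑ o', μ o' := Finset.single_le_sum (fun o' _ => hμ.1 o') (Finset.mem_univ o)
      _ = 1 := hμ.2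
  have hp1 : p ≤ 1 := hμle1 oₚ
  -- the geometric-mean function g
  set g : (O → ℝ) → ℝ := fun ν => ∏ o ∈ supp, ν o ^ (μ o) with hgdef
  have hg_cont : Continuous g := by
    refine continuous_finset_prod _ fun o ho => ?_
    have h1 : Continuous fun t : ℝ => t ^ (μ o) :=
      continuous_iff_continuousAt.mpr fun x =>
        Real.continuousAt_rpow_const x (μ o) (Or.inr (hμpos o ho).le)
    exact h1.comp (continuous_apply o)
  have hgμpos : 0 < g μ :=
    Finset.prod_pos fun o ho => Real.rpow_pos_of_pos (hμpos o ho) _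
  -- compactness of S and the maximum of g on S
  have hS_compact : IsCompact S :=
    simplex_isCompact.inter_right (isClosed_le continuous_const (euclDist_continuous μ))
  obtain ⟨ν₀, hν₀S, hmax⟩ := hS_compact.exists_isMaxOn hSne hg_cont.continuousOn
  have hgle : ∀ x, x ∈ simplex O → ε ≤ euclDist x μ → g x ≤ g ν₀ :=
    fun x h1 h2 => hmax ⟨h1, h2⟩
  have hν₀ne : ν₀ ≠ μ := by
    intro hc
    have h2 : ε ≤ euclDist μ μ := hc ▸ hν₀S.2
    rw [euclDist_self] at h2
    linarith
  have hgν₀lt : g ν₀ < g μ := gibbs_strict μ ν₀ hμ hν₀S.1 hν₀ne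
  -- bound B for pla
  obtain ⟨νB, hνB, hBmax⟩ := simplex_isCompact.exists_isMaxOn ⟨μ, hμ⟩ hpla_cont
  set B := pla νB with hBdef
  have hB0 : 0 < B := lt_of_lt_of_le hplaμpos (le_of_le_of_eq (hBmax hμ) hBdef.symm)
  clear_value B
  -- parameters
  set G := max (g ν₀) (g μ / 2) with hGdef
  have hG0 : 0 < G := lt_of_lt_of_le (half_pos hgμpos) (le_max_right _ _)
  have hGlt : G < g μ := max_lt hgν₀lt (half_lt_self hgμpos)
  set L := Real.log (g μ) with hLdef
  set s := (L - Real.log G) / 3 with hsdef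
  have hs0 : 0 < s := by
    have := Real.log_lt_log hG0 hGlt
    rw [hsdef]; linarith
  set δ := min ((p/2) ^ ((2:ℝ)/p)) (1/2 : ℝ) with hδdef
  have hδ0 : 0 < δ := lt_min (Real.rpow_pos_of_pos (half_pos hp0) _) (by norm_num)
  have hδhalf : δ ≤ 1/2 := min_le_right _ _
  have hδ1 : δ ≤ 1 := le_trans hδhalf (by norm_num)
  have hδp : δ ^ (p/2) ≤ p/2 := by
    have h1 : δ ^ (p/2) ≤ ((p/2) ^ ((2:ℝ)/p)) ^ (p/2) :=
      Real.rpow_le_rpow hδ0.le (min_le_left _ _) (by positivity)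
    have h2 : ((p/2) ^ ((2:ℝ)/p)) ^ (p/2) = (p/2) ^ (((2:ℝ)/p) * (p/2)) :=
      (Real.rpow_mul (half_pos hp0).le _ _).symm
    have h3 : ((2:ℝ)/p) * (p/2) = 1 := by field_simp
    rw [h2, h3, Real.rpow_one] at h1
    exact h1
  set q := δ ^ (p/2) / p with hqdef
  have hq0 : 0 < q := div_pos (Real.rpow_pos_of_pos hδ0 _) hp0
  have hq1 : q < 1 := (div_lt_one hp0).mpr (lt_of_le_of_lt hδp (half_lt_self hp0))
  set n := (supp.card : ℝ) with hndef
  have hn0 : 0 ≤ n := Nat.cast_nonneg _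
  have hlogδinv : 0 ≤ Real.log δ⁻¹ :=
    Real.log_nonneg (one_le_inv_iff₀.mpr ⟨hδ0, hδ1⟩)
  have hlogpinv : 0 ≤ Real.log p⁻¹ :=
    Real.log_nonneg (one_le_inv_iff₀.mpr ⟨hp0, hp1⟩)
  set C := n * (Real.log δ⁻¹ + Real.log p⁻¹) + 1 with hCdef
  have hC0 : 0 < C := by positivity
  set η := s / C with hηdef
  have hη0 : 0 < η := div_pos hs0 hC0
  have hηC : η * C = s := div_mul_cancel₀ s hC0.ne'
  have hηδ : η * (n * Real.log δ⁻¹) ≤ s := by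
    calc η * (n * Real.log δ⁻¹) ≤ η * C := by
          apply mul_le_mul_of_nonneg_left _ hη0.le
          rw [hCdef]; nlinarith
      _ = s := hηC
  have hηp : η * (n * Real.log p⁻¹) ≤ s := by
    calc η * (n * Real.log p⁻¹) ≤ η * C := by
          apply mul_le_mul_of_nonneg_left _ hη0.le
          rw [hCdef]; nlinarith
      _ = s := hηC
  set a := Real.log G + η * (n * Real.log δ⁻¹) with hadef
  set b := L - η * (n * Real.log p⁻¹) with hbdef
  have hab : a - b ≤ -s := by
    rw [hadef, hbdef]
    have : L - Real.log G = 3 * s := by rw [hsdef]; ring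
    linarith
  set η' := min η (p/2) with hη'def
  have hη'0 : 0 < η' := lt_min hη0 (half_pos hp0)
  have hη'η : η' ≤ η := min_le_left _ _
  have hη'p : η' ≤ p/2 := min_le_right _ _
  set q₂ := Real.exp (-s) with hq₂def
  have hq₂0 : 0 < q₂ := Real.exp_pos _
  have hq₂1 : q₂ < 1 := Real.exp_lt_one_iff.mpr (by linarith)
  clear_value p L s δ q n C η a b η' q₂ G
  clear hmax hν₀S hS_compact hSdef
  clear_value S
  -- eventual conditions
  have hEv1 : ∀ᶠ m : ℕ in atTop, ∀ o : O,
      |(((Finset.range m).filter (fun i => ω i = o)).card : ℝ) / m - μ o| ≤ η' := by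
    rw [eventually_all]
    intro o
    obtain ⟨K, hK⟩ := Metric.tendsto_atTop.mp (hfreq o) η' hη'0
    exact eventually_atTop.mpr ⟨K, fun m hm => le_of_lt (by
      simpa [Real.dist_eq] using hK m hm)⟩
  have hEv2 : ∀ᶠ m : ℕ in atTop, q ^ m * B < pla μ := by
    have h := (tendsto_pow_atTop_nhds_zero_of_lt_one hq0.le hq1).mul_const B
    rw [zero_mul] at h
    exact h.eventually_lt_const hplaμpos
  have hEv3 : ∀ᶠ m : ℕ in atTop, q₂ ^ m * B < pla μ := by
    have h := (tendsto_pow_atTop_nhds_zero_of_lt_one hq₂0.le hq₂1).mul_const B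
    rw [zero_mul] at h
    exact h.eventually_lt_const hplaμpos
  have hEv0 : ∀ᶠ m : ℕ in atTop, 1 ≤ m := eventually_ge_atTop 1
  obtain ⟨K, hK⟩ := eventually_atTop.mp ((hEv0.and hEv1).and (hEv2.and hEv3))
  refine ⟨K, fun m hm ν hνs hd => ?_⟩
  obtain ⟨⟨hm1, hfr⟩, hq3, hq4⟩ := hK m hm
  -- notation for counts
  set N : O → ℕ := fun o => ((Finset.range m).filter (fun i => ω i = o)).card with hNdef
  have hm0 : (0:ℝ) < m := by exact_mod_cast hm1
  have Noff : ∀ o, μ o = 0 → N o = 0 := by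
    intro o ho
    have he : (Finset.range m).filter (fun i => ω i = o) = ∅ := by
      rw [Finset.filter_eq_empty_iff]
      intro i _ hc
      exact hsupp i (by rw [hc]; exact ho)
    simp [hNdef, he]
  have prod_supp : ∀ f : O → ℝ, ∏ i ∈ Finset.range m, f (ω i) = ∏ o ∈ supp, f o ^ (N o) := by
    intro f
    rw [prod_comp_eq ω f m]
    refine (Finset.prod_subset (Finset.subset_univ supp) ?_).symm
    intro o _ ho
    have hμ0 : μ o = 0 := by
      by_contra hc
      exact ho (Finset.mem_filter.mpr ⟨Finset.mem_univ o, hc⟩)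
    show f o ^ N o = 1
    rw [Noff o hμ0, pow_zero]
  have hNsum : ∑ o ∈ supp, N o = m := by
    rw [Finset.sum_subset (Finset.subset_univ supp) (fun o _ ho => Noff o (by
      by_contra hc
      exact ho (Finset.mem_filter.mpr ⟨Finset.mem_univ o, hc⟩)))]
    exact card_sum ω m
  have hν1 : ∀ o, ν o ≤ 1 := fun o => by
    calc ν o ≤ ∑ o', ν o' := Finset.single_le_sum (fun o' _ => hνs.1 o') (Finset.mem_univ o)
      _ = 1 := hνs.2
  have habs : ∀ o, |(N o : ℝ) - m * μ o| ≤ η' * m := by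
    intro o
    have he : (N o : ℝ) - m * μ o = ((N o : ℝ)/m - μ o) * m := by field_simp
    rw [he, abs_mul, abs_of_pos hm0]
    exact mul_le_mul_of_nonneg_right (hfr o) hm0.le
  clear_value N
  have hNlow : ∀ o ∈ supp, p/2 * m ≤ (N o : ℝ) := by
    intro o ho
    have h1 := (abs_le.mp (habs o)).1
    have h2 : (m:ℝ) * p ≤ m * μ o := mul_le_mul_of_nonneg_left (hple o ho) hm0.le
    have h3 : η' * m ≤ p/2 * m := mul_le_mul_of_nonneg_right hη'p hm0.le
    linarith
  -- rewrite both sides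
  rw [prod_supp ν, prod_supp μ]
  have hprodν_nonneg : 0 ≤ ∏ o ∈ supp, ν o ^ (N o) :=
    Finset.prod_nonneg fun o _ => pow_nonneg (hνs.1 o) _
  have hplaν : pla ν ≤ B := le_of_le_of_eq (hBmax hνs) hBdef.symm
  have hrhs_ge : pla μ * (p:ℝ) ^ m ≤ pla μ * ∏ o ∈ supp, μ o ^ (N o) := by
    apply mul_le_mul_of_nonneg_left _ hplaμpos.le
    calc (p:ℝ) ^ m = p ^ (∑ o ∈ supp, N o) := by rw [hNsum]
      _ = ∏ o ∈ supp, p ^ (N o) := by rw [Finset.prod_pow_eq_pow_sum]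
      _ ≤ ∏ o ∈ supp, μ o ^ (N o) :=
        Finset.prod_le_prod (fun o _ => pow_nonneg hp0.le _)
          (fun o ho => pow_le_pow_left₀ hp0.le (hple o ho) _)
  by_cases hcase : ∀ o ∈ supp, δ ≤ ν o
  · -- Case 1 : ν bounded below on supp
    have hνpos : ∀ o ∈ supp, 0 < ν o := fun o ho => lt_of_lt_of_le hδ0 (hcase o ho)
    have hgν0 : 0 < g ν :=
      Finset.prod_pos fun o ho => Real.rpow_pos_of_pos (hνpos o ho) _
    have hgνG : g ν ≤ G := le_trans (hgle ν hνs hd) (by rw [hGdef]; exact le_max_left _ _)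
    -- log of g ν
    have hloggν : Real.log (g ν) = ∑ o ∈ supp, μ o * Real.log (ν o) := by
      rw [hgdef]
      rw [Real.log_prod (fun o ho => (Real.rpow_pos_of_pos (hνpos o ho) _).ne')]
      exact Finset.sum_congr rfl fun o ho => Real.log_rpow (hνpos o ho) (μ o)
    have hloggμ : Real.log (g μ) = ∑ o ∈ supp, μ o * Real.log (μ o) := by
      rw [hgdef]
      rw [Real.log_prod (fun o ho => (Real.rpow_pos_of_pos (hμpos o ho) _).ne')]
      exact Finset.sum_congr rfl fun o ho => Real.log_rpow (hμpos o ho) (μ o)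
    -- exponential representations
    have e_ν : ∏ o ∈ supp, ν o ^ (N o)
        = Real.exp (∑ o ∈ supp, (N o : ℝ) * Real.log (ν o)) := by
      rw [Real.exp_sum]
      refine Finset.prod_congr rfl fun o ho => ?_
      rw [← Real.log_pow, Real.exp_log (pow_pos (hνpos o ho) _)]
    have e_μ : ∏ o ∈ supp, μ o ^ (N o)
        = Real.exp (∑ o ∈ supp, (N o : ℝ) * Real.log (μ o)) := by
      rw [Real.exp_sum]
      refine Finset.prod_congr rfl fun o ho => ?_
      rw [← Real.log_pow, Real.exp_log (pow_pos (hμpos o ho) _)]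
    -- bounds on the exponents
    have hsum_ν : ∑ o ∈ supp, (N o : ℝ) * Real.log (ν o) ≤ m * a := by
      have hsplit : ∀ o ∈ supp, (N o : ℝ) * Real.log (ν o)
          = (m * μ o) * Real.log (ν o) + ((N o : ℝ) - m * μ o) * Real.log (ν o) :=
        fun o _ => by ring
      rw [Finset.sum_congr rfl hsplit, Finset.sum_add_distrib]
      have h1 : ∑ o ∈ supp, (m * μ o) * Real.log (ν o) ≤ m * Real.log G := by
        have : ∑ o ∈ supp, (m * μ o) * Real.log (ν o)
            = m * ∑ o ∈ supp, μ o * Real.log (ν o) := by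
          rw [Finset.mul_sum]; exact Finset.sum_congr rfl fun o _ => by ring
        rw [this, ← hloggν]
        exact mul_le_mul_of_nonneg_left (Real.log_le_log hgν0 hgνG) hm0.le
      have h2 : ∑ o ∈ supp, ((N o : ℝ) - m * μ o) * Real.log (ν o)
          ≤ m * (η * (n * Real.log δ⁻¹)) := by
        have hterm : ∀ o ∈ supp, ((N o : ℝ) - m * μ o) * Real.log (ν o)
            ≤ η * m * Real.log δ⁻¹ := by
          intro o ho
          have hlogν_abs : |Real.log (ν o)| ≤ Real.log δ⁻¹ := by
            have hl1 : Real.log (ν o) ≤ 0 := Real.log_nonpos (hνs.1 o) (hν1 o)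
            have hl2 : Real.log δ ≤ Real.log (ν o) := Real.log_le_log hδ0 (hcase o ho)
            rw [abs_of_nonpos hl1, Real.log_inv]
            linarith
          calc ((N o : ℝ) - m * μ o) * Real.log (ν o)
              ≤ |((N o : ℝ) - m * μ o) * Real.log (ν o)| := le_abs_self _
            _ = |(N o : ℝ) - m * μ o| * |Real.log (ν o)| := abs_mul _ _
            _ ≤ (η' * m) * Real.log δ⁻¹ := by
                exact mul_le_mul (habs o) hlogν_abs (abs_nonneg _)
                  (mul_nonneg hη'0.le hm0.le)
            _ ≤ η * m * Real.log δ⁻¹ := by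
                apply mul_le_mul_of_nonneg_right _ hlogδinv
                exact mul_le_mul_of_nonneg_right hη'η hm0.le
        calc ∑ o ∈ supp, ((N o : ℝ) - m * μ o) * Real.log (ν o)
            ≤ ∑ _o ∈ supp, η * m * Real.log δ⁻¹ := Finset.sum_le_sum hterm
          _ = n * (η * m * Real.log δ⁻¹) := by
              rw [Finset.sum_const, nsmul_eq_mul, hndef]
          _ = m * (η * (n * Real.log δ⁻¹)) := by ring
      rw [hadef]
      calc _ ≤ m * Real.log G + m * (η * (n * Real.log δ⁻¹)) := add_le_add h1 h2
        _ = m * (Real.log G + η * (n * Real.log δ⁻¹)) := by ring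
    have hsum_μ : m * b ≤ ∑ o ∈ supp, (N o : ℝ) * Real.log (μ o) := by
      have hsplit : ∀ o ∈ supp, (N o : ℝ) * Real.log (μ o)
          = (m * μ o) * Real.log (μ o) + ((N o : ℝ) - m * μ o) * Real.log (μ o) :=
        fun o _ => by ring
      rw [Finset.sum_congr rfl hsplit, Finset.sum_add_distrib]
      have h1 : ∑ o ∈ supp, (m * μ o) * Real.log (μ o) = m * L := by
        rw [hLdef, hloggμ, Finset.mul_sum]
        exact Finset.sum_congr rfl fun o _ => by ring
      have h2 : -(m * (η * (n * Real.log p⁻¹)))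
          ≤ ∑ o ∈ supp, ((N o : ℝ) - m * μ o) * Real.log (μ o) := by
        have hterm : ∀ o ∈ supp, -(η * m * Real.log p⁻¹)
            ≤ ((N o : ℝ) - m * μ o) * Real.log (μ o) := by
          intro o ho
          have hlogμ_abs : |Real.log (μ o)| ≤ Real.log p⁻¹ := by
            have hl1 : Real.log (μ o) ≤ 0 := Real.log_nonpos (hμ.1 o) (hμle1 o)
            have hl2 : Real.log p ≤ Real.log (μ o) := Real.log_le_log hp0 (hple o ho)
            rw [abs_of_nonpos hl1, Real.log_inv]
            linarith
          have h3 : |((N o : ℝ) - m * μ o) * Real.log (μ o)| ≤ η * m * Real.log p⁻¹ := by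
            rw [abs_mul]
            calc |(N o : ℝ) - m * μ o| * |Real.log (μ o)|
                ≤ (η' * m) * Real.log p⁻¹ := by
                  exact mul_le_mul (habs o) hlogμ_abs (abs_nonneg _)
                    (mul_nonneg hη'0.le hm0.le)
              _ ≤ η * m * Real.log p⁻¹ := by
                  apply mul_le_mul_of_nonneg_right _ hlogpinv
                  exact mul_le_mul_of_nonneg_right hη'η hm0.le
          have := neg_abs_le (((N o : ℝ) - m * μ o) * Real.log (μ o))
          linarith
        calc -(m * (η * (n * Real.log p⁻¹)))
            = ∑ _o ∈ supp, -(η * m * Real.log p⁻¹) := by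
              rw [Finset.sum_const, nsmul_eq_mul, hndef]; ring
          _ ≤ _ := Finset.sum_le_sum hterm
      rw [hbdef]
      have : m * (L - η * (n * Real.log p⁻¹))
          = m * L + -(m * (η * (n * Real.log p⁻¹))) := by ring
      rw [this, h1]
      exact add_le_add le_rfl h2
    -- final comparison
    rw [e_ν, e_μ]
    calc pla ν * Real.exp (∑ o ∈ supp, (N o : ℝ) * Real.log (ν o))
        ≤ B * Real.exp (m * a) := by
          apply mul_le_mul hplaν (Real.exp_le_exp.mpr hsum_ν) (Real.exp_pos _).le hB0.le
      _ < pla μ * Real.exp (m * b) := by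
          have he : Real.exp (m * a) = Real.exp (m * b) * Real.exp (m * a - m * b) := by
            rw [← Real.exp_add]; ring_nf
          have hle : Real.exp (m * a - m * b) ≤ q₂ ^ m := by
            rw [hq₂def, ← Real.exp_nat_mul]
            apply Real.exp_le_exp.mpr
            have : m * a - m * b = (m:ℝ) * (a - b) := by ring
            rw [this]
            calc (m:ℝ) * (a - b) ≤ (m:ℝ) * (-s) :=
                mul_le_mul_of_nonneg_left hab hm0.le
              _ = (m:ℝ) * (-s) := rfl
          calc B * Real.exp (m * a)
              = B * Real.exp (m * a - m * b) * Real.exp (m * b) := by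
                rw [he]; ring
            _ ≤ B * q₂ ^ m * Real.exp (m * b) := by
                apply mul_le_mul_of_nonneg_right _ (Real.exp_pos _).le
                exact mul_le_mul_of_nonneg_left hle hB0.le
            _ < pla μ * Real.exp (m * b) := by
                apply mul_lt_mul_of_pos_right _ (Real.exp_pos _)
                rw [mul_comm]; exact hq4
      _ ≤ pla μ * Real.exp (∑ o ∈ supp, (N o : ℝ) * Real.log (μ o)) := by
          apply mul_le_mul_of_nonneg_left (Real.exp_le_exp.mpr hsum_μ) hplaμpos.le
  · -- Case 2 : some coordinate of ν on supp is below δ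
    push_neg at hcase
    obtain ⟨o₁, ho₁, hν₁δ⟩ := hcase
    have hb1 : ∏ o ∈ supp, ν o ^ (N o) ≤ (ν o₁) ^ (N o₁) := by
      rw [← Finset.mul_prod_erase supp _ ho₁]
      have h1 : ∏ o ∈ supp.erase o₁, ν o ^ (N o) ≤ 1 :=
        Finset.prod_le_one (fun o _ => pow_nonneg (hνs.1 o) _)
          (fun o _ => pow_le_one₀ (hνs.1 o) (hν1 o))
      calc (ν o₁) ^ (N o₁) * ∏ o ∈ supp.erase o₁, ν o ^ (N o)
          ≤ (ν o₁) ^ (N o₁) * 1 :=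
            mul_le_mul_of_nonneg_left h1 (pow_nonneg (hνs.1 o₁) _)
        _ = (ν o₁) ^ (N o₁) := mul_one _
    have hb2 : (ν o₁) ^ (N o₁) ≤ δ ^ (N o₁) :=
      pow_le_pow_left₀ (hνs.1 o₁) hν₁δ.le _
    have hb3 : (δ:ℝ) ^ (N o₁) ≤ (δ ^ (p/2)) ^ m := by
      have h1 : (δ:ℝ) ^ (N o₁) = δ ^ ((N o₁ : ℝ)) := (Real.rpow_natCast δ _).symm
      have h2 : (δ:ℝ) ^ ((N o₁:ℝ)) ≤ δ ^ (p/2 * m) :=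
        Real.rpow_le_rpow_of_exponent_ge hδ0 hδ1 (hNlow o₁ ho₁)
      have h3 : (δ:ℝ) ^ (p/2 * (m:ℝ)) = (δ ^ (p/2)) ^ (m:ℕ) := by
        rw [Real.rpow_mul hδ0.le, Real.rpow_natCast]
      rw [h1, ← h3]
      exact h2
    have hδq : (δ ^ (p/2)) ^ m = q ^ m * p ^ m := by
      have : δ ^ (p/2) = q * p := by
        rw [hqdef, div_mul_cancel₀ _ hp0.ne']
      rw [this, mul_pow]
    calc pla ν * ∏ o ∈ supp, ν o ^ (N o)
        ≤ B * ((δ ^ (p/2)) ^ m) := by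
          apply mul_le_mul hplaν (le_trans hb1 (le_trans hb2 hb3)) hprodν_nonneg hB0.le
      _ = (q ^ m * B) * p ^ m := by rw [hδq]; ring
      _ < pla μ * p ^ m := by
          apply mul_lt_mul_of_pos_right hq3 (pow_pos hp0 _)
      _ ≤ pla μ * ∏ o ∈ supp, μ o ^ (N o) := hrhs_ge
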